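/- The Rogers–Ramanujan identity: Σ_{m=0}^∞ q^{m²}/(q)_m = Π_{j=0}^∞ 1/((1-q^{5j+1})(1-q^{5j+4})) as formal power series in q. Equivalently (the n = k = 1 case of the main identity), (1/(q)_∞) Σ_{u∈Z} (-1)^u q^{(5/2)u² + u/2} = Σ_{m=0}^∞ q^{m²}/(q)_m. -/

import Mathlib

open PowerSeries

/-- `(q)_m = ∏_{j=1}^m (1 - q^j)`. -/
noncomputable def qPoch (m : ℕ) : PowerSeries ℚ :=
  ∏ j ∈ Finset.range m, (1 - (X : PowerSeries ℚ) ^ (j + 1))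

/-- `(q)_∞ = ∏_{j=1}^∞ (1 - q^j)`, defined coefficient-wise (the coefficient of `q^N` in
`∏_{j=1}^M (1-q^j)` is independent of `M ≥ N`). -/
noncomputable def eulerProd : PowerSeries ℚ :=
  PowerSeries.mk fun N => PowerSeries.coeff N (qPoch (N + 1))

/-- `Σ_{m=0}^∞ q^{m²}/(q)_m`, defined coefficient-wise: only `m ≤ N` contributes to the
coefficient of `q^N` since the summand is divisible by `q^{m²}`. -/
noncomputable def rrSum : PowerSeries ℚ :=
  PowerSeries.mk fun N =>
    PowerSeries.coeff N
      (∑ m ∈ Finset.range (N + 1), (X : PowerSeries ℚ) ^ (m ^ 2) * (qPoch m)⁻¹)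

/-- `∏_{j=0}^∞ 1/((1-q^{5j+1})(1-q^{5j+4}))`, defined coefficient-wise: factors with
`j > N` do not affect the coefficient of `q^N`. -/
noncomputable def rrProd : PowerSeries ℚ :=
  PowerSeries.mk fun N =>
    PowerSeries.coeff N
      (∏ j ∈ Finset.range (N + 1),
        ((1 - (X : PowerSeries ℚ) ^ (5 * j + 1))⁻¹ * (1 - (X : PowerSeries ℚ) ^ (5 * j + 4))⁻¹))

open Finset

noncomputable section RRaux

abbrev PS := PowerSeries ℚ

/-- Gaussian binomial with base `Q`. -/
def gb (Q : PS) : ℕ → ℕ → PS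
  | _, 0 => 1
  | 0, _ + 1 => 0
  | n + 1, k + 1 => gb Q n (k + 1) + Q ^ (n - k) * gb Q n k

@[simp] lemma gb_zero_right (Q : PS) (n : ℕ) : gb Q n 0 = 1 := by cases n <;> rfl

lemma gb_succ_succ (Q : PS) (n k : ℕ) :
    gb Q (n + 1) (k + 1) = gb Q n (k + 1) + Q ^ (n - k) * gb Q n k := rfl

lemma gb_eq_zero (Q : PS) : ∀ {n k : ℕ}, n < k → gb Q n k = 0
  | 0, _ + 1, _ => rfl
  | n + 1, k + 1, h => by
    rw [gb_succ_succ, gb_eq_zero Q (by omega), gb_eq_zero Q (n := n) (k := k) (by omega)]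
    ring

lemma gb_diag (Q : PS) : ∀ n : ℕ, gb Q n n = 1
  | 0 => rfl
  | n + 1 => by
    rw [gb_succ_succ, gb_eq_zero Q (by omega), gb_diag Q n]
    simp

lemma gb_pascal2_zero (Q : PS) : ∀ n : ℕ, gb Q (n + 1) 1 = Q * gb Q n 1 + 1
  | 0 => by simp [gb_succ_succ, gb_eq_zero Q (by omega : (0:ℕ) < 1)]
  | n + 1 => by
    have h := gb_pascal2_zero Q n
    have d1 : gb Q (n + 1) 1 = gb Q n 1 + Q ^ (n - 0) * gb Q n 0 := gb_succ_succ Q n 0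
    have d2 : gb Q (n + 2) 1 = gb Q (n + 1) 1 + Q ^ (n + 1 - 0) * gb Q (n + 1) 0 :=
      gb_succ_succ Q (n + 1) 0
    simp only [gb_zero_right, mul_one, Nat.sub_zero] at d1 d2
    rw [d2]
    linear_combination (-Q) * d1 + h

/-- Second Pascal identity. -/
lemma gb_pascal2 (Q : PS) : ∀ n k : ℕ,
    gb Q (n + 1) (k + 1) = Q ^ (k + 1) * gb Q n (k + 1) + gb Q n k := by
  intro n
  induction n with
  | zero =>
    intro k
    cases k with
    | zero => simpa using gb_pascal2_zero Q 0
    | succ k =>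
      rw [gb_eq_zero Q (by omega : 1 < k + 2), gb_eq_zero Q (by omega : 0 < k + 2),
        gb_eq_zero Q (by omega : 0 < k + 1)]
      ring
  | succ n ih =>
    intro k
    cases k with
    | zero => simpa using gb_pascal2_zero Q (n + 1)
    | succ k' =>
      have E1 := gb_succ_succ Q (n + 1) (k' + 1)
      have E2 := ih (k' + 1)
      have E3 := ih k'
      have E4 := gb_succ_succ Q n (k' + 1)
      have E5 := gb_succ_succ Q n k'
      by_cases h : k' + 1 ≤ n
      · rw [show n + 1 - (k' + 1) = (n - (k' + 1)) + 1 by omega] at E1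
        rw [show n - (k' + 1) = n - (k' + 1) from rfl] at E4
        rw [show n - k' = (n - (k' + 1)) + 1 by omega] at E5
        linear_combination E1 + E2 + Q ^ (n - (k' + 1) + 1) * E3 - Q ^ (k' + 2) * E4 - E5
      · have hD : gb Q n (k' + 2) = 0 := gb_eq_zero Q (by omega)
        have hE : gb Q n (k' + 1) = 0 := gb_eq_zero Q (by omega)
        rw [show n + 1 - (k' + 1) = 0 by omega] at E1
        rw [hD, hE] at E2
        linear_combination E1 + (1 - Q ^ (k' + 2)) * E2 + E3 - E3

/-- `(Q)_m` with base `Q`. -/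
def poch (Q : PS) (m : ℕ) : PS := ∏ j ∈ range m, (1 - Q ^ (j + 1))

@[simp] lemma poch_zero (Q : PS) : poch Q 0 = 1 := by simp [poch]

lemma poch_succ (Q : PS) (m : ℕ) : poch Q (m + 1) = poch Q m * (1 - Q ^ (m + 1)) :=
  prod_range_succ _ _

/-- product formula for Gaussian binomials. -/
lemma gb_mul_poch (Q : PS) : ∀ a m : ℕ, m ≤ a →
    gb Q a m * poch Q m * poch Q (a - m) = poch Q a
  | a, 0, _ => by simp [poch]
  | 0, m + 1, h => by omega
  | a + 1, m + 1, h => by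
    by_cases hm : m + 1 ≤ a
    · have ih1 := gb_mul_poch Q a (m + 1) hm
      have ih2 := gb_mul_poch Q a m (by omega)
      have e1 : a + 1 - (m + 1) = (a - (m + 1)) + 1 := by omega
      have e2 : a - m = (a - (m + 1)) + 1 := by omega
      have e3 : a + 1 = (a - (m + 1)) + 1 + (m + 1) := by omega
      rw [poch_succ Q m] at ih1
      rw [e2, poch_succ Q (a - (m + 1))] at ih2
      rw [gb_succ_succ, e1, e2, poch_succ Q (a - (m + 1)), poch_succ Q m, poch_succ Q a,
        e3, pow_add]
      linear_combination (1 - Q ^ (a - (m + 1) + 1)) * ih1 +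
        Q ^ (a - (m + 1) + 1) * (1 - Q ^ (m + 1)) * ih2
    · have : m = a := by omega
      subst this
      simp [gb_diag]



/-- congruence mod `X^T` -/
def Meq (T : ℕ) (A B : PS) : Prop := (X : PS) ^ T ∣ A - B

lemma Meq.refl {T : ℕ} (A : PS) : Meq T A A := by simp [Meq]

lemma Meq.of_eq {T : ℕ} {A B : PS} (h : A = B) : Meq T A B := by simp [Meq, h]

lemma Meq.symm {T : ℕ} {A B : PS} (h : Meq T A B) : Meq T B A := by
  simpa [Meq] using (dvd_neg).2 h

lemma Meq.trans {T : ℕ} {A B C : PS} (h1 : Meq T A B) (h2 : Meq T B C) : Meq T A C := by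
  simpa [Meq, sub_add_sub_cancel] using dvd_add h1 h2

lemma Meq.add {T : ℕ} {A B C D : PS} (h1 : Meq T A B) (h2 : Meq T C D) :
    Meq T (A + C) (B + D) := by
  have := dvd_add h1 h2
  simpa [Meq, sub_add_sub_comm] using this

lemma Meq.mul {T : ℕ} {A B C D : PS} (h1 : Meq T A B) (h2 : Meq T C D) :
    Meq T (A * C) (B * D) := by
  have : A * C - B * D = (A - B) * C + B * (C - D) := by ring
  rw [Meq, this]
  exact dvd_add (Dvd.dvd.mul_right h1 C) (Dvd.dvd.mul_left h2 B)

lemma Meq.sum {α : Type*} {T : ℕ} {s : Finset α} {f g : α → PS} (h : ∀ i ∈ s, Meq T (f i) (g i)) :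
    Meq T (∑ i ∈ s, f i) (∑ i ∈ s, g i) := by
  rw [Meq, ← Finset.sum_sub_distrib]
  exact Finset.dvd_sum h

lemma Meq.prod_one {α : Type*} {T : ℕ} {s : Finset α} {f : α → PS} (h : ∀ i ∈ s, Meq T (f i) 1) :
    Meq T (∏ i ∈ s, f i) 1 := by
  classical
  induction s using Finset.induction_on with
  | empty => exact Meq.refl 1
  | @insert a s' hx ih =>
    rw [Finset.prod_insert hx]
    have h1 := h a (Finset.mem_insert_self a s')
    have h2 := ih fun i hi => h i (Finset.mem_insert_of_mem hi)
    simpa using h1.mul h2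

lemma Meq.zero_of_dvd {T e : ℕ} (h : T ≤ e) (A : PS) : Meq T ((X : PS) ^ e * A) 0 := by
  rw [Meq, sub_zero]
  exact Dvd.dvd.mul_right (pow_dvd_pow _ h) A

lemma Meq.coeff {T N : ℕ} {A B : PS} (h : Meq T A B) (hN : N < T) :
    coeff N A = coeff N B := by
  have := (PowerSeries.X_pow_dvd_iff.1 h) N hN
  rw [map_sub] at this
  linarith

lemma Meq_of_coeff {T : ℕ} {A B : PS} (h : ∀ m < T, coeff m A = coeff m B) :
    Meq T A B := by
  rw [Meq, PowerSeries.X_pow_dvd_iff]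
  intro m hm
  rw [map_sub, h m hm, sub_self]

lemma Meq.mono {T T' : ℕ} {A B : PS} (h : T' ≤ T) (hm : Meq T A B) : Meq T' A B :=
  dvd_trans (pow_dvd_pow _ h) hm

/-- cancel a unit factor -/
lemma Meq.cancel {T : ℕ} {U A B : PS} (hU : constantCoeff U ≠ 0)
    (h : Meq T (A * U) (B * U)) : Meq T A B := by
  have h2 : A - B = (A * U - B * U) * U⁻¹ := by
    have := PowerSeries.mul_inv_cancel U hU
    calc A - B = (A - B) * (U * U⁻¹) := by rw [this]; ring
    _ = (A * U - B * U) * U⁻¹ := by ring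
  rw [Meq, h2]
  exact Dvd.dvd.mul_right h _

lemma constCoeff_one_sub_pow (k : ℕ) (hk : 1 ≤ k) :
    constantCoeff (1 - (X : PS) ^ k) = 1 := by
  rw [map_sub, map_one, map_pow, constantCoeff_X]
  simp [zero_pow (by omega : k ≠ 0)]

lemma constCoeff_poch_pow (r m : ℕ) (hr : 1 ≤ r) :
    constantCoeff (poch ((X : PS) ^ r) m) = 1 := by
  rw [poch, map_prod]
  apply Finset.prod_eq_one
  intro j _
  rw [← pow_mul]
  exact constCoeff_one_sub_pow _ (by nlinarith)

/-- `1 - X^k ≡ 1 mod X^T` for `k ≥ T`. -/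
lemma Meq_one_sub_pow {T k : ℕ} (h : T ≤ k) : Meq T (1 - (X : PS) ^ k) 1 := by
  rw [Meq]
  simpa using (dvd_neg).2 (pow_dvd_pow (X : PS) h)

/-- stability of `poch (X^r)` -/
lemma Meq_poch_poch {r T a b : ℕ} (hr : 1 ≤ r) (ha : T ≤ r * a + r) (hb : T ≤ r * b + r) :
    Meq T (poch ((X : PS) ^ r) a) (poch ((X : PS) ^ r) b) := by
  -- reduce to the case of comparing with min
  wlog hab : a ≤ b generalizing a b
  · exact (this hb ha (by omega)).symm
  have : poch ((X : PS) ^ r) b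
      = poch ((X : PS) ^ r) a * ∏ j ∈ Ico a b, (1 - ((X : PS) ^ r) ^ (j + 1)) := by
    rw [poch, poch, Finset.prod_range_mul_prod_Ico _ hab]
  rw [this]
  have h1 : Meq T (∏ j ∈ Ico a b, (1 - ((X : PS) ^ r) ^ (j + 1))) 1 := by
    apply Meq.prod_one
    intro i hi
    rw [← pow_mul]
    apply Meq_one_sub_pow
    have : a ≤ i := (Finset.mem_Ico.1 hi).1
    calc T ≤ r * a + r := ha
      _ ≤ r * (i + 1) := by nlinarith
  have := (Meq.refl (T := T) (poch ((X : PS) ^ r) a)).mul h1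
  simpa using this.symm

/-- `(1-X^k)⁻¹ ≡ 1 mod X^T` for `k ≥ T` -/
lemma Meq_inv_one_sub_pow {T k : ℕ} (h : T ≤ k) (hk : 1 ≤ k) :
    Meq T (1 - (X : PS) ^ k)⁻¹ 1 := by
  apply Meq.cancel (U := 1 - (X : PS) ^ k) (by rw [constCoeff_one_sub_pow k hk]; norm_num)
  rw [PowerSeries.inv_mul_cancel _ (by rw [constCoeff_one_sub_pow k hk]; norm_num), one_mul]
  exact (Meq_one_sub_pow h).symm


def tri (k : ℕ) : ℕ := ∑ i ∈ range k, i

@[simp] lemma tri_zero : tri 0 = 0 := rfl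

lemma tri_succ (k : ℕ) : tri (k + 1) = tri k + k := by
  rw [tri, Finset.sum_range_succ]; rfl

/-- Cauchy's homogeneous q-binomial theorem. -/
theorem cauchy (Q y z : PS) : ∀ m : ℕ,
    ∏ i ∈ range m, (y + z * Q ^ i) =
      ∑ k ∈ range (m + 1), gb Q m k * Q ^ tri k * z ^ k * y ^ (m - k) := by
  intro m
  induction m with
  | zero => simp [tri, gb_zero_right]
  | succ m ih =>
    rw [prod_range_succ, ih, mul_add, Finset.sum_mul, Finset.sum_mul]
    have step1 : ∑ k ∈ range (m + 1), gb Q m k * Q ^ tri k * z ^ k * y ^ (m - k) * y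
        = (∑ k ∈ range (m + 1), gb Q m (k + 1) * Q ^ tri (k + 1) * z ^ (k + 1) * y ^ (m - k))
          + y ^ (m + 1) := by
      have h1 : ∑ k ∈ range (m + 1), gb Q m k * Q ^ tri k * z ^ k * y ^ (m - k) * y
          = ∑ k ∈ range (m + 1), gb Q m k * Q ^ tri k * z ^ k * y ^ (m + 1 - k) := by
        apply Finset.sum_congr rfl
        intro k hk
        have hk' : k ≤ m := Nat.lt_succ_iff.1 (Finset.mem_range.1 hk)
        rw [show m + 1 - k = (m - k) + 1 by omega, pow_succ]
        ring
      rw [h1, Finset.sum_range_succ' (fun k => gb Q m k * Q ^ tri k * z ^ k * y ^ (m + 1 - k)) m]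
      simp only [gb_zero_right, tri_zero, pow_zero, one_mul,
        Nat.sub_zero, mul_one, Nat.succ_sub_succ]
      rw [Finset.sum_range_succ (fun k => gb Q m (k + 1) * Q ^ tri (k + 1) * z ^ (k + 1) * y ^ (m - k)) m]
      rw [gb_eq_zero Q (by omega : m < m + 1)]
      ring
    rw [step1]
    rw [Finset.sum_range_succ'
      (fun k => gb Q (m + 1) k * Q ^ tri k * z ^ k * y ^ (m + 1 - k)) (m + 1)]
    have step2 : (∑ k ∈ range (m + 1), gb Q m (k + 1) * Q ^ tri (k + 1) * z ^ (k + 1) * y ^ (m - k))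
          + y ^ (m + 1)
          + ∑ k ∈ range (m + 1), gb Q m k * Q ^ tri k * z ^ k * y ^ (m - k) * (z * Q ^ m)
        = (∑ k ∈ range (m + 1),
            gb Q (m + 1) (k + 1) * Q ^ tri (k + 1) * z ^ (k + 1) * y ^ (m + 1 - (k + 1)))
          + y ^ (m + 1) := by
      rw [add_right_comm, ← Finset.sum_add_distrib]
      congr 1
      apply Finset.sum_congr rfl
      intro k hk
      have hk' : k ≤ m := Nat.lt_succ_iff.1 (Finset.mem_range.1 hk)
      rw [gb_succ_succ, Nat.succ_sub_succ]
      have hQ : Q ^ tri k * Q ^ m = Q ^ (m - k) * Q ^ tri (k + 1) := by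
        rw [← pow_add, ← pow_add, show tri k + m = (m - k) + tri (k + 1) by rw [tri_succ]; omega]
      linear_combination (gb Q m k * z ^ (k + 1) * y ^ (m - k)) * hQ
    rw [step2]
    simp [gb_zero_right, tri_zero]

lemma tri_add (a b : ℕ) : tri (a + b) = tri a + tri b + a * b := by
  induction b with
  | zero => simp [tri]
  | succ b ih =>
    have h1 : tri (a + (b + 1)) = tri (a + b) + (a + b) := by
      rw [show a + (b + 1) = (a + b) + 1 by omega, tri, Finset.sum_range_succ]; rfl
    have h2 : tri (b + 1) = tri b + b := by rw [tri, Finset.sum_range_succ]; rfl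
    rw [h1, h2, ih]; ring

lemma tri_two (d : ℕ) : 2 * tri d + d = d * d := by
  induction d with
  | zero => simp [tri]
  | succ d ih =>
    have h2 : tri (d + 1) = tri d + d := by rw [tri, Finset.sum_range_succ]; rfl
    have h3 : (d + 1) * (d + 1) = d * d + 2 * d + 1 := by ring
    omega

/-- natural exponent of the theta series term, `u = n - k` signed. -/
def tn (n k : ℕ) : ℕ :=
  if n ≤ k then 5 * tri (k - n) + 2 * (k - n) else 5 * tri (n - k) + 3 * (n - k)

lemma tn_eq_int (n : ℕ) (k : ℕ) :
    ((n : ℤ) - k) * (5 * ((n : ℤ) - k) + 1) / 2 = (tn n k : ℤ) := by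
  rcases le_or_gt n k with h | h
  · obtain ⟨d, rfl⟩ : ∃ d, k = n + d := ⟨k - n, by omega⟩
    rw [tn, if_pos (by omega), show n + d - n = d by omega]
    have h2 := tri_two d
    have : ((n : ℤ) - ((n + d : ℕ) : ℤ)) * (5 * ((n : ℤ) - ((n + d : ℕ) : ℤ)) + 1)
        = 2 * ((5 * tri d + 2 * d : ℕ) : ℤ) := by push_cast; nlinarith [h2]
    rw [this, Int.mul_ediv_cancel_left _ (by norm_num)]
  · obtain ⟨d, rfl⟩ : ∃ d, n = k + d := ⟨n - k, by omega⟩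
    rw [tn, if_neg (by omega), show k + d - k = d by omega]
    have h2 := tri_two d
    have : (((k + d : ℕ) : ℤ) - k) * (5 * (((k + d : ℕ) : ℤ) - k) + 1)
        = 2 * ((5 * tri d + 3 * d : ℕ) : ℤ) := by push_cast; nlinarith [h2]
    rw [this, Int.mul_ediv_cancel_left _ (by norm_num)]

/-- the key exponent identity -/
lemma eps_eq (n k : ℕ) (hk : k ≤ 2 * n) :
    5 * tri k + 2 * k + 5 * (n * (2 * n - k)) = (5 * tri n + 2 * n + 5 * (n * n)) + tn n k := by
  rcases le_or_gt n k with h | h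
  · obtain ⟨d, rfl⟩ : ∃ d, k = n + d := ⟨k - n, by omega⟩
    have hd : d ≤ n := by omega
    rw [tn, if_pos (by omega), show n + d - n = d by omega, tri_add n d,
      show 2 * n - (n + d) = n - d by omega]
    zify [hd]
    ring
  · obtain ⟨d, rfl⟩ : ∃ d, n = k + d := ⟨n - k, by omega⟩
    have h2 := tri_two d
    rw [tn, if_neg (by omega), show k + d - k = d by omega, tri_add k d,
      show 2 * (k + d) - k = k + 2 * d by omega]
    zify
    nlinarith [h2]

/-- finite Jacobi triple product, Rogers–Ramanujan specialization. -/
theorem jtp (n : ℕ) :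
    (∏ i ∈ range n, (1 - (X : PS) ^ (5 * i + 3))) * (∏ i ∈ range n, (1 - (X : PS) ^ (5 * i + 2)))
      = ∑ k ∈ range (2 * n + 1), (-1 : PS) ^ (n + k) * X ^ tn n k * gb ((X : PS) ^ 5) (2 * n) k := by
  have C := cauchy ((X : PS) ^ 5) ((X : PS) ^ (5 * n)) (-(X : PS) ^ 2) (2 * n)
  -- LHS of C
  have hL : ∏ i ∈ range (2 * n), ((X : PS) ^ (5 * n) + (-(X : PS) ^ 2) * ((X : PS) ^ 5) ^ i)
      = (-1 : PS) ^ n * X ^ (5 * tri n + 2 * n + 5 * (n * n)) *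
        ((∏ i ∈ range n, (1 - (X : PS) ^ (5 * i + 3))) *
         (∏ i ∈ range n, (1 - (X : PS) ^ (5 * i + 2)))) := by
    have e1 : ∀ i : ℕ, (X : PS) ^ (5 * n) + (-(X : PS) ^ 2) * ((X : PS) ^ 5) ^ i
        = (X : PS) ^ (5 * n) - (X : PS) ^ (5 * i + 2) := by
      intro i
      rw [← pow_mul, pow_add]
      ring
    rw [show 2 * n = n + n by omega, Finset.prod_range_add]
    simp only [e1]
    have hfirst : ∏ i ∈ range n, ((X : PS) ^ (5 * n) - (X : PS) ^ (5 * i + 2))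
        = (-1 : PS) ^ n * X ^ (5 * tri n + 2 * n) *
          ∏ i ∈ range n, (1 - (X : PS) ^ (5 * i + 3)) := by
      have e2 : ∀ i ∈ range n, (X : PS) ^ (5 * n) - (X : PS) ^ (5 * i + 2)
          = (-1 : PS) * (X : PS) ^ (5 * i + 2) * (1 - (X : PS) ^ (5 * (n - 1 - i) + 3)) := by
        intro i hi
        have hi' : i < n := Finset.mem_range.1 hi
        have hadd : (5 * i + 2) + (5 * (n - 1 - i) + 3) = 5 * n := by omega
        have hx : (X : PS) ^ (5 * i + 2) * (X : PS) ^ (5 * (n - 1 - i) + 3) = (X:PS) ^ (5 * n) := by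
          rw [← pow_add, hadd]
        linear_combination (-1 : PS) * hx
      rw [Finset.prod_congr rfl e2]
      rw [Finset.prod_mul_distrib, Finset.prod_mul_distrib, Finset.prod_const]
      have e3 : ∏ i ∈ range n, (X : PS) ^ (5 * i + 2) = X ^ (5 * tri n + 2 * n) := by
        rw [Finset.prod_pow_eq_pow_sum]
        congr 1
        rw [Finset.sum_add_distrib, ← Finset.mul_sum, ← tri]
        simp [Finset.sum_const, mul_comm]
      have e4 : ∏ i ∈ range n, (1 - (X : PS) ^ (5 * (n - 1 - i) + 3))
          = ∏ i ∈ range n, (1 - (X : PS) ^ (5 * i + 3)) := by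
        exact Finset.prod_range_reflect (fun i => 1 - (X : PS) ^ (5 * i + 3)) n
      rw [e3, e4, Finset.card_range]
    have hsecond : ∏ i ∈ range n, ((X : PS) ^ (5 * n) - (X : PS) ^ (5 * (n + i) + 2))
        = X ^ (5 * (n * n)) * ∏ i ∈ range n, (1 - (X : PS) ^ (5 * i + 2)) := by
      have e2 : ∀ i ∈ range n, (X : PS) ^ (5 * n) - (X : PS) ^ (5 * (n + i) + 2)
          = (X : PS) ^ (5 * n) * (1 - (X : PS) ^ (5 * i + 2)) := by
        intro i hi
        rw [mul_sub, mul_one, ← pow_add, show 5 * n + (5 * i + 2) = 5 * (n + i) + 2 by ring]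
      rw [Finset.prod_congr rfl e2, Finset.prod_mul_distrib, Finset.prod_const,
        Finset.card_range, ← pow_mul, show 5 * n * n = 5 * (n * n) by ring]
    rw [hfirst, hsecond]
    calc ((-1 : PS) ^ n * X ^ (5 * tri n + 2 * n) * ∏ i ∈ range n, (1 - (X : PS) ^ (5 * i + 3))) *
          (X ^ (5 * (n * n)) * ∏ i ∈ range n, (1 - (X : PS) ^ (5 * i + 2)))
        = (-1 : PS) ^ n * ((X : PS) ^ (5 * tri n + 2 * n) * (X : PS) ^ (5 * (n * n))) *
          ((∏ i ∈ range n, (1 - (X : PS) ^ (5 * i + 3))) *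
           (∏ i ∈ range n, (1 - (X : PS) ^ (5 * i + 2)))) := by ring
      _ = _ := by rw [← pow_add, show n + n = 2 * n by omega]
  -- RHS of C
  have hR : ∑ k ∈ range (2 * n + 1),
        gb ((X : PS) ^ 5) (2 * n) k * ((X : PS) ^ 5) ^ tri k * (-(X : PS) ^ 2) ^ k *
          ((X : PS) ^ (5 * n)) ^ (2 * n - k)
      = X ^ (5 * tri n + 2 * n + 5 * (n * n)) *
        ∑ k ∈ range (2 * n + 1), (-1 : PS) ^ k * X ^ tn n k * gb ((X : PS) ^ 5) (2 * n) k := by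
    rw [Finset.mul_sum]
    apply Finset.sum_congr rfl
    intro k hk
    have hk'' : k ≤ 2 * n := Nat.lt_succ_iff.1 (Finset.mem_range.1 hk)
    have h1 : (-(X : PS) ^ 2) ^ k = (-1 : PS) ^ k * (X : PS) ^ (2 * k) := by
      rw [neg_pow, ← pow_mul]
    have h2 : ((X : PS) ^ 5) ^ tri k = (X : PS) ^ (5 * tri k) := by rw [← pow_mul]
    have h3 : ((X : PS) ^ (5 * n)) ^ (2 * n - k) = (X : PS) ^ (5 * (n * (2 * n - k))) := by
      rw [← pow_mul]; congr 1; ring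
    rw [h1, h2, h3]
    calc gb ((X : PS) ^ 5) (2 * n) k * (X : PS) ^ (5 * tri k) *
          ((-1 : PS) ^ k * (X : PS) ^ (2 * k)) * (X : PS) ^ (5 * (n * (2 * n - k)))
        = (-1 : PS) ^ k * ((X : PS) ^ (5 * tri k) * (X : PS) ^ (2 * k) *
            (X : PS) ^ (5 * (n * (2 * n - k)))) * gb ((X : PS) ^ 5) (2 * n) k := by ring
      _ = (-1 : PS) ^ k * (X : PS) ^ (5 * tri k + 2 * k + 5 * (n * (2 * n - k))) *
            gb ((X : PS) ^ 5) (2 * n) k := by rw [← pow_add, ← pow_add]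
      _ = (-1 : PS) ^ k * (X : PS) ^ ((5 * tri n + 2 * n + 5 * (n * n)) + tn n k) *
            gb ((X : PS) ^ 5) (2 * n) k := by rw [eps_eq n k hk'']
      _ = X ^ (5 * tri n + 2 * n + 5 * (n * n)) *
            ((-1 : PS) ^ k * X ^ tn n k * gb ((X : PS) ^ 5) (2 * n) k) := by
          rw [pow_add]; ring
  rw [hL, hR] at C
  have hx : (X : PS) ^ (5 * tri n + 2 * n + 5 * (n * n)) ≠ 0 :=
    pow_ne_zero _ PowerSeries.X_ne_zero
  have C2 : (-1 : PS) ^ n * ((∏ i ∈ range n, (1 - (X : PS) ^ (5 * i + 3))) *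
      (∏ i ∈ range n, (1 - (X : PS) ^ (5 * i + 2))))
      = ∑ k ∈ range (2 * n + 1), (-1 : PS) ^ k * X ^ tn n k * gb ((X : PS) ^ 5) (2 * n) k := by
    apply mul_left_cancel₀ hx
    rw [show (X : PS) ^ (5 * tri n + 2 * n + 5 * (n * n)) *
        ((-1 : PS) ^ n * ((∏ i ∈ range n, (1 - (X : PS) ^ (5 * i + 3))) *
          (∏ i ∈ range n, (1 - (X : PS) ^ (5 * i + 2)))))
        = (-1 : PS) ^ n * (X : PS) ^ (5 * tri n + 2 * n + 5 * (n * n)) *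
          ((∏ i ∈ range n, (1 - (X : PS) ^ (5 * i + 3))) *
           (∏ i ∈ range n, (1 - (X : PS) ^ (5 * i + 2)))) by ring, ← C]
  have hneg : ((-1 : PS) ^ n) * ((-1 : PS) ^ n) = 1 := by
    rw [← pow_add, show n + n = 2 * n by omega, pow_mul]
    norm_num
  calc (∏ i ∈ range n, (1 - (X : PS) ^ (5 * i + 3))) * (∏ i ∈ range n, (1 - (X : PS) ^ (5 * i + 2)))
      = ((-1 : PS) ^ n) * (((-1 : PS) ^ n) * ((∏ i ∈ range n, (1 - (X : PS) ^ (5 * i + 3))) *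
          (∏ i ∈ range n, (1 - (X : PS) ^ (5 * i + 2))))) := by
        rw [← mul_assoc, hneg, one_mul]
    _ = ((-1 : PS) ^ n) * ∑ k ∈ range (2 * n + 1),
          (-1 : PS) ^ k * X ^ tn n k * gb ((X : PS) ^ 5) (2 * n) k := by rw [C2]
    _ = ∑ k ∈ range (2 * n + 1), (-1 : PS) ^ (n + k) * X ^ tn n k * gb ((X : PS) ^ 5) (2 * n) k := by
        rw [Finset.mul_sum]
        apply Finset.sum_congr rfl
        intro k _
        rw [pow_add]
        ring

/-- sign `(-1)^j` -/
def sg (j : ℤ) : PS := if Even j then 1 else -1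

lemma sg_succ (j : ℤ) : sg (j + 1) = -sg j := by
  by_cases h : Even j
  · rw [sg, sg, if_neg (by rw [Int.even_add_one]; simpa using h), if_pos h]
  · rw [sg, sg, if_pos (Int.even_add_one.2 h), if_neg h]
    simp

/-- natural value of `j(5j+1)/2` -/
def sig (j : ℤ) : ℕ := 5 * tri j.natAbs + (if 0 ≤ j then 3 else 2) * j.natAbs

lemma sig_int (j : ℤ) : 2 * (sig j : ℤ) = j * (5 * j + 1) := by
  rcases le_or_gt 0 j with h | h
  · obtain ⟨d, rfl⟩ : ∃ d : ℕ, j = (d : ℤ) := ⟨j.toNat, by omega⟩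
    have h2 := tri_two d
    rw [sig, if_pos h, Int.natAbs_natCast]
    push_cast
    nlinarith [h2]
  · obtain ⟨d, rfl⟩ : ∃ d : ℕ, j = -(d : ℤ) := ⟨j.natAbs, by omega⟩
    have h2 := tri_two d
    rw [sig, if_neg (by omega), Int.natAbs_neg, Int.natAbs_natCast]
    push_cast
    nlinarith [h2]

lemma sig_eq_int (j : ℤ) : j * (5 * j + 1) / 2 = (sig j : ℤ) := by
  have := sig_int j
  omega

/-- the exponent-shift identity for the odd case -/
lemma sig_shift (j : ℤ) (n bN : ℕ) (hb2 : 2 ≤ bN) (hbn : bN ≤ n)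
    (hv : (n : ℤ) - 5 * j = 2 * bN + 1) :
    sig j + (n - bN) = sig (j + 1) + (bN - 2) := by
  have e1 := sig_int j
  have e2 := sig_int (j + 1)
  have h2 : 2 * ((sig j : ℤ) + ((n : ℤ) - bN)) = 2 * ((sig (j + 1) : ℤ) + ((bN : ℤ) - 2)) := by
    linear_combination e1 - e2 + 2 * hv
  omega

/-- `[n, ⌊(n-5j)/2⌋]` with out-of-range convention 0 -/
def cc (n : ℕ) (j : ℤ) : PS :=
  if 0 ≤ (n : ℤ) - 5 * j then gb X n (((n : ℤ) - 5 * j) / 2).toNat else 0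

lemma cc_eq (n : ℕ) (j : ℤ) (b : ℕ)
    (hv : (n : ℤ) - 5 * j = 2 * b ∨ (n : ℤ) - 5 * j = 2 * b + 1) :
    cc n j = gb X n b := by
  have ht : (((n : ℤ) - 5 * j) / 2).toNat = b := by omega
  rw [cc, if_pos (by omega), ht]

lemma cc_zero_neg {n : ℕ} {j : ℤ} (h : (n : ℤ) - 5 * j < 0) : cc n j = 0 := by
  rw [cc, if_neg (by omega)]

lemma cc_zero_big {n : ℕ} {j : ℤ} (h : 2 * (n : ℤ) + 2 ≤ (n : ℤ) - 5 * j) : cc n j = 0 := by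
  rw [cc, if_pos (by omega)]
  exact gb_eq_zero X (by omega)

def sterm (n : ℕ) (j : ℤ) : PS := sg j * X ^ sig j * cc n j

def eS (n : ℕ) : PS := ∑ j ∈ Finset.Icc (-(n : ℤ)) (n : ℤ), sterm n j

def dS (n : ℕ) : PS := ∑ m ∈ range (n + 1), X ^ (m ^ 2) * gb X (n - m) m

def HH (n : ℕ) (j : ℤ) : PS :=
  if 0 ≤ (n : ℤ) - 5 * j ∧ ((n : ℤ) - 5 * j) % 2 = 0 then
    sg j * X ^ (sig j + (((n : ℤ) - 5 * j) / 2).toNat) * gb X (n - 2) (((n : ℤ) - 5 * j) / 2).toNat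
  else 0

lemma HH_eq (n : ℕ) (j : ℤ) (b : ℕ) (hv : (n : ℤ) - 5 * j = 2 * b) :
    HH n j = sg j * X ^ (sig j + b) * gb X (n - 2) b := by
  rw [HH, if_pos (by omega)]
  have : (((n : ℤ) - 5 * j) / 2).toNat = b := by omega
  rw [this]

lemma HH_zero_neg {n : ℕ} {j : ℤ} (h : (n : ℤ) - 5 * j < 0) : HH n j = 0 := by
  rw [HH, if_neg (by omega)]

lemma HH_zero_odd {n : ℕ} {j : ℤ} (h : ((n : ℤ) - 5 * j) % 2 = 1) : HH n j = 0 := by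
  rw [HH, if_neg (by omega)]

lemma HH_zero_big {n : ℕ} {j : ℤ} (h : 2 * (n : ℤ) - 2 ≤ (n : ℤ) - 5 * j) (hn : 2 ≤ n) :
    HH n j = 0 := by
  by_cases hp : ((n : ℤ) - 5 * j) % 2 = 0
  · rw [HH, if_pos (by constructor <;> omega)]
    rw [gb_eq_zero X (show n - 2 < (((n : ℤ) - 5 * j) / 2).toNat by omega)]
    ring
  · rw [HH, if_neg (by omega)]

/-- the key termwise identity -/
lemma key (n : ℕ) (hn : 2 ≤ n) (j : ℤ) :
    sterm n j = sterm (n - 1) j + X ^ (n - 1) * sterm (n - 2) j + HH n j - HH n (j + 1) := by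
  have hc1 : ((n - 1 : ℕ) : ℤ) = (n : ℤ) - 1 := by omega
  have hc2 : ((n - 2 : ℕ) : ℤ) = (n : ℤ) - 2 := by omega
  rcases lt_or_ge ((n : ℤ) - 5 * j) 0 with hv | hv
  · -- case A : guard fails everywhere
    rw [sterm, sterm, sterm, cc_zero_neg hv, cc_zero_neg (by omega : ((n-1:ℕ):ℤ) - 5*j < 0),
      cc_zero_neg (by omega : ((n-2:ℕ):ℤ) - 5*j < 0), HH_zero_neg hv,
      HH_zero_neg (by omega : (n:ℤ) - 5*(j+1) < 0)]
    ring
  · rcases Int.even_or_odd ((n : ℤ) - 5 * j) with ⟨c, hc⟩ | ⟨c, hc⟩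
    · -- case B : v = 2b even
      obtain ⟨b, hb⟩ : ∃ b : ℕ, (n : ℤ) - 5 * j = 2 * b := ⟨((n:ℤ) - 5*j).toNat / 2, by omega⟩
      have hB1 : HH n (j + 1) = 0 := by
        rcases lt_or_ge ((n:ℤ) - 5*(j+1)) 0 with h | h
        · exact HH_zero_neg h
        · exact HH_zero_odd (by omega)
      rcases Nat.eq_zero_or_pos b with hb0 | hb0
      · -- B0 : b = 0
        subst hb0
        rw [sterm, sterm, sterm, cc_eq n j 0 (by omega), cc_zero_neg (by omega),
          cc_zero_neg (by omega), HH_eq n j 0 (by omega), hB1, gb_zero_right, gb_zero_right]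
        ring
      · -- B1 : b ≥ 1
        rw [sterm, sterm, sterm, cc_eq n j b (by omega), cc_eq (n-1) j (b-1) (by right; omega),
          cc_eq (n-2) j (b-1) (by left; omega), HH_eq n j b hb, hB1]
        have main : gb X n b = gb X (n-1) (b-1) + X^(n-1) * gb X (n-2) (b-1) + X^b * gb X (n-2) b := by
          have p2 : gb X n b = X ^ b * gb X (n - 1) b + gb X (n-1) (b-1) := by
            have := gb_pascal2 X (n-1) (b-1)
            rw [show n - 1 + 1 = n by omega, show b - 1 + 1 = b by omega] at this
            exact this
          rcases le_or_gt b (n - 1) with hble | hbgt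
          · have p1 : gb X (n-1) b = gb X (n-2) b + X ^ ((n-1) - b) * gb X (n-2) (b-1) := by
              have := gb_succ_succ X (n-2) (b-1)
              rw [show n - 2 + 1 = n - 1 by omega, show b - 1 + 1 = b by omega,
                show n - 2 - (b - 1) = n - 1 - b by omega] at this
              exact this
            rw [p2, p1]
            have hxx : (X:PS) ^ b * (X:PS) ^ (n - 1 - b) = X ^ (n-1) := by
              rw [← pow_add, show b + (n - 1 - b) = n - 1 by omega]
            linear_combination (gb X (n-2) (b-1)) * hxx
          · rw [p2, gb_eq_zero X (show n - 1 < b by omega),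
              gb_eq_zero X (show n - 2 < b - 1 by omega),
              gb_eq_zero X (show n - 2 < b by omega)]
            ring
        rw [main]
        ring
    · -- case C : v = 2b+1 odd
      obtain ⟨b, hb⟩ : ∃ b : ℕ, (n : ℤ) - 5 * j = 2 * b + 1 := ⟨((n:ℤ) - 5*j).toNat / 2, by omega⟩
      have hBj : HH n j = 0 := HH_zero_odd (by omega)
      rcases Nat.eq_zero_or_pos b with hb0 | hb0
      · -- C0 : b = 0
        subst hb0
        rw [sterm, sterm, sterm, cc_eq n j 0 (by omega), cc_eq (n-1) j 0 (by left; omega),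
          cc_zero_neg (by omega), hBj, HH_zero_neg (by omega), gb_zero_right, gb_zero_right]
        ring
      · rcases Nat.lt_or_ge b 2 with hb1 | hb2
        · -- C1 : b = 1
          have hb1' : b = 1 := by omega
          subst hb1'
          rw [sterm, sterm, sterm, cc_eq n j 1 (by omega), cc_eq (n-1) j 1 (by left; omega),
            cc_eq (n-2) j 0 (by right; omega), hBj, HH_zero_neg (by omega), gb_zero_right]
          have main : gb X n 1 = gb X (n-1) 1 + X ^ (n-1) * 1 := by
            have := gb_succ_succ X (n-1) 0
            rw [show n - 1 + 1 = n by omega, Nat.sub_zero, gb_zero_right, mul_one] at this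
            rw [this]; ring
          rw [main]
          ring
        · -- C2 : b ≥ 2
          rw [sterm, sterm, sterm, cc_eq n j b (by omega), cc_eq (n-1) j b (by left; omega),
            cc_eq (n-2) j (b-1) (by right; omega), hBj,
            HH_eq n (j+1) (b-2) (by push_cast; omega), sg_succ]
          rcases le_or_gt b n with hble | hbgt
          · have hshift : sig (j+1) + (b - 2) = sig j + (n - b) :=
              (sig_shift j n b hb2 hble hb).symm
            rw [hshift]
            have main : gb X n b = gb X (n-1) b + X^(n-1) * gb X (n-2) (b-1)
                + X^(n-b) * gb X (n-2) (b-2) := by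
              have p1 : gb X n b = gb X (n-1) b + X ^ (n - b) * gb X (n-1) (b-1) := by
                have := gb_succ_succ X (n-1) (b-1)
                rw [show n - 1 + 1 = n by omega, show b - 1 + 1 = b by omega,
                  show n - 1 - (b - 1) = n - b by omega] at this
                exact this
              have p2 : gb X (n-1) (b-1) = X ^ (b-1) * gb X (n-2) (b-1) + gb X (n-2) (b-2) := by
                have := gb_pascal2 X (n-2) (b-2)
                rw [show n - 2 + 1 = n - 1 by omega, show b - 2 + 1 = b - 1 by omega] at this
                exact this
              rw [p1, p2]
              have hxx : (X:PS) ^ (n - b) * (X:PS) ^ (b - 1) = X ^ (n-1) := by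
                rw [← pow_add, show (n - b) + (b - 1) = n - 1 by omega]
              linear_combination (gb X (n-2) (b-1)) * hxx
            rw [main, pow_add]
            ring
          · rw [gb_eq_zero X (show n < b by omega), gb_eq_zero X (show n - 1 < b by omega),
              gb_eq_zero X (show n - 2 < b - 1 by omega), gb_eq_zero X (show n - 2 < b - 2 by omega)]
            ring

section Rec
open Finset

lemma shift_sum (a b : ℤ) (f : ℤ → PS) :
    ∑ j ∈ Finset.Icc a b, f (j + 1) = ∑ j ∈ Finset.Icc (a + 1) (b + 1), f j := by
  have h : Finset.Icc (a + 1) (b + 1) = Finset.map (addRightEmbedding 1) (Finset.Icc a b) := by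
    rw [Finset.map_add_right_Icc]
  rw [h, Finset.sum_map]
  rfl

lemma eS_rec (N : ℕ) : eS (N + 2) = eS (N + 1) + X ^ (N + 1) * eS N := by
  have hn : 2 ≤ N + 2 := by omega
  have h1 : eS (N + 1) = ∑ j ∈ Finset.Icc (-(N + 2 : ℤ)) ((N + 2 : ℤ)), sterm (N + 1) j := by
    rw [eS]
    apply Finset.sum_subset
    · apply Finset.Icc_subset_Icc <;> push_cast <;> omega
    · intro j hj hnj
      simp only [Finset.mem_Icc] at hj hnj
      push_cast at hj hnj
      have : j = (N + 2 : ℤ) ∨ j = -(N + 2 : ℤ) := by omega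
      rw [sterm]
      rcases this with rfl | rfl
      · rw [cc_zero_neg (by push_cast; omega)]; ring
      · rw [cc_zero_big (by push_cast; omega)]; ring
  have h2 : eS N = ∑ j ∈ Finset.Icc (-(N + 2 : ℤ)) ((N + 2 : ℤ)), sterm N j := by
    rw [eS]
    apply Finset.sum_subset
    · apply Finset.Icc_subset_Icc <;> push_cast <;> omega
    · intro j hj hnj
      simp only [Finset.mem_Icc] at hj hnj
      push_cast at hj hnj
      rw [sterm]
      rcases le_or_gt j 0 with hj0 | hj0
      · rw [cc_zero_big (by push_cast; omega)]; ring
      · rw [cc_zero_neg (by push_cast; omega)]; ring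
  have tele : ∑ j ∈ Finset.Icc (-(N + 2 : ℤ)) ((N + 2 : ℤ)), (HH (N + 2) j - HH (N + 2) (j + 1))
      = 0 := by
    rw [Finset.sum_sub_distrib]
    rw [shift_sum (-(N + 2 : ℤ)) ((N + 2 : ℤ)) (HH (N + 2))]
    have ext1 : ∑ j ∈ Finset.Icc (-(N + 2 : ℤ)) ((N + 2 : ℤ)), HH (N + 2) j
        = ∑ j ∈ Finset.Icc (-(N + 2 : ℤ)) ((N + 2 : ℤ) + 1), HH (N + 2) j := by
      apply Finset.sum_subset
      · apply Finset.Icc_subset_Icc <;> omega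
      · intro j hj hnj
        simp only [Finset.mem_Icc] at hj hnj
        exact HH_zero_neg (by push_cast; omega)
    have ext2 : ∑ j ∈ Finset.Icc (-(N + 2 : ℤ) + 1) ((N + 2 : ℤ) + 1), HH (N + 2) j
        = ∑ j ∈ Finset.Icc (-(N + 2 : ℤ)) ((N + 2 : ℤ) + 1), HH (N + 2) j := by
      apply Finset.sum_subset
      · apply Finset.Icc_subset_Icc <;> omega
      · intro j hj hnj
        simp only [Finset.mem_Icc] at hj hnj
        have : j = -(N + 2 : ℤ) := by omega
        subst this
        exact HH_zero_big (by push_cast; omega) hn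
    rw [ext1, ext2, sub_self]
  have keyall : ∀ j ∈ Finset.Icc (-(N + 2 : ℤ)) ((N + 2 : ℤ)),
      sterm (N + 2) j = sterm (N + 1) j + X ^ (N + 1) * sterm N j
        + (HH (N + 2) j - HH (N + 2) (j + 1)) := by
    intro j _
    have := key (N + 2) hn j
    rw [show N + 2 - 1 = N + 1 by omega, show N + 2 - 2 = N by omega] at this
    rw [this]; ring
  have unf : eS (N + 2) = ∑ j ∈ Finset.Icc (-(N + 2 : ℤ)) ((N + 2 : ℤ)), sterm (N + 2) j := by
    rw [eS]
    congr 1 <;> push_cast <;> ring_nf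
  rw [unf, Finset.sum_congr rfl keyall, Finset.sum_add_distrib, Finset.sum_add_distrib, tele,
    add_zero, h1, h2, Finset.mul_sum]

lemma dS_rec (N : ℕ) : dS (N + 2) = dS (N + 1) + X ^ (N + 1) * dS N := by
  have peel2 : dS (N + 2) = (∑ m ∈ range (N + 2), X ^ ((m + 1) ^ 2) * gb X (N + 1 - m) (m + 1)) + 1 := by
    rw [dS, Finset.sum_range_succ' (fun m => X ^ (m ^ 2) * gb X (N + 2 - m) m) (N + 2)]
    congr 1
    · apply Finset.sum_congr rfl
      intro m _
      rw [show N + 2 - (m + 1) = N + 1 - m by omega]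
    · simp [gb_zero_right]
  have peel1 : dS (N + 1) = (∑ m ∈ range (N + 2), X ^ ((m + 1) ^ 2) * gb X (N - m) (m + 1)) + 1 := by
    rw [dS, Finset.sum_range_succ' (fun m => X ^ (m ^ 2) * gb X (N + 1 - m) m) (N + 1)]
    have ext : ∑ m ∈ range (N + 2), X ^ ((m + 1) ^ 2) * gb X (N - m) (m + 1)
        = ∑ m ∈ range (N + 1), X ^ ((m + 1) ^ 2) * gb X (N - m) (m + 1) := by
      rw [Finset.sum_range_succ, gb_eq_zero X (show N - (N + 1) < N + 2 by omega), mul_zero,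
        add_zero]
    rw [ext]
    congr 1
    · apply Finset.sum_congr rfl
      intro m _
      rw [show N + 1 - (m + 1) = N - m by omega]
    · simp [gb_zero_right]
  have second : ∑ m ∈ range (N + 2), X ^ ((m + 1) ^ 2) * (X ^ (N - m - m) * gb X (N - m) m)
      = X ^ (N + 1) * dS N := by
    rw [dS, Finset.mul_sum]
    have ext : ∑ m ∈ range (N + 2), X ^ ((m + 1) ^ 2) * (X ^ (N - m - m) * gb X (N - m) m)
        = ∑ m ∈ range (N + 1), X ^ ((m + 1) ^ 2) * (X ^ (N - m - m) * gb X (N - m) m) := by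
      rw [Finset.sum_range_succ, gb_eq_zero X (show N - (N + 1) < N + 1 by omega), mul_zero,
        mul_zero, add_zero]
    rw [ext]
    apply Finset.sum_congr rfl
    intro m hm
    have hm' : m ≤ N := by have := Finset.mem_range.1 hm; omega
    by_cases h : 2 * m ≤ N
    · rw [← mul_assoc, ← pow_add]
      have hsq : (m + 1) ^ 2 = m ^ 2 + 2 * m + 1 := by ring
      have hexp : m ^ 2 + 2 * m + 1 + (N - m - m) = N + 1 + m ^ 2 := by
        generalize m ^ 2 = s
        omega
      rw [hsq, hexp, pow_add]
      ring
    · rw [gb_eq_zero X (show N - m < m by omega)]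
      ring
  have A : ∀ m ∈ range (N + 2), X ^ ((m + 1) ^ 2) * gb X (N + 1 - m) (m + 1)
      = X ^ ((m + 1) ^ 2) * gb X (N - m) (m + 1)
        + X ^ ((m + 1) ^ 2) * (X ^ (N - m - m) * gb X (N - m) m) := by
    intro m _
    by_cases h : 2 * m ≤ N
    · have hs := gb_succ_succ X (N - m) m
      rw [show N - m + 1 = N + 1 - m by omega] at hs
      rw [hs]
      ring
    · rw [gb_eq_zero X (show N + 1 - m < m + 1 by omega),
        gb_eq_zero X (show N - m < m + 1 by omega), gb_eq_zero X (show N - m < m by omega)]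
      ring
  rw [peel2, Finset.sum_congr rfl A, Finset.sum_add_distrib, second, peel1]
  ring

lemma dS_zero : dS 0 = 1 := by simp [dS, gb_zero_right]
lemma dS_one : dS 1 = 1 := by
  rw [dS, Finset.sum_range_succ, Finset.sum_range_succ, Finset.sum_range_zero,
    gb_eq_zero X (show 1 - 1 < 1 by omega), gb_zero_right]
  simp

lemma eS_zero : eS 0 = 1 := by
  rw [eS]
  simp only [Nat.cast_zero, neg_zero]
  rw [show Finset.Icc (0:ℤ) (0:ℤ) = {0} by rfl]
  rw [Finset.sum_singleton, sterm, cc_eq 0 0 0 (by omega)]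
  simp [sg, sig, tri, gb_zero_right]

lemma eS_one : eS 1 = 1 := by
  rw [eS]
  simp only [Nat.cast_one]
  rw [show Finset.Icc (-(1:ℤ)) (1:ℤ) = {-1, 0, 1} by rfl]
  rw [Finset.sum_insert (by decide), Finset.sum_insert (by decide), Finset.sum_singleton]
  rw [sterm, sterm, sterm, cc_eq 1 (-1) 3 (by omega), cc_eq 1 0 0 (by omega),
    cc_zero_neg (by omega), gb_eq_zero X (show (1:ℕ) < 3 by omega)]
  simp [sg, sig, tri, gb_zero_right]

/-- Schur's finite Rogers–Ramanujan identity. -/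
theorem schur : ∀ n : ℕ, dS n = eS n := by
  have H : ∀ n : ℕ, dS n = eS n ∧ dS (n + 1) = eS (n + 1) := by
    intro n
    induction n with
    | zero => exact ⟨by rw [dS_zero, eS_zero], by rw [dS_one, eS_one]⟩
    | succ n ih =>
      refine ⟨ih.2, ?_⟩
      rw [dS_rec n, eS_rec n, ih.1, ih.2]
  exact fun n => (H n).1

end Rec

end RRaux

section Assembly
open Finset

lemma qpoch_eq (m : ℕ) : qPoch m = poch X m := rfl

lemma meq_poch1 {T a b : ℕ} (ha : T ≤ a + 1) (hb : T ≤ b + 1) : Meq T (poch X a) (poch X b) := by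
  have h := Meq_poch_poch (r := 1) (T := T) (a := a) (b := b) le_rfl (by omega) (by omega)
  rwa [pow_one] at h

lemma const_poch (r m : ℕ) (hr : 1 ≤ r) : constantCoeff (poch ((X : PS) ^ r) m) = 1 :=
  constCoeff_poch_pow r m hr

lemma const_pochX (m : ℕ) : constantCoeff (poch X m) = 1 := by
  have h := constCoeff_poch_pow 1 m le_rfl
  rwa [pow_one] at h

lemma coeff_zero_of_hi {j e : ℕ} (f : PS) (h : j < e) : coeff j ((X : PS) ^ e * f) = 0 := by
  have hd : (X : PS) ^ (j + 1) ∣ (X : PS) ^ e * f :=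
    Dvd.dvd.mul_right (pow_dvd_pow _ (by omega)) f
  exact PowerSeries.X_pow_dvd_iff.1 hd j (lt_add_one j)

lemma euler_trunc (T M : ℕ) (h : T ≤ M) : Meq T eulerProd (poch X M) := by
  apply Meq_of_coeff
  intro m hm
  rw [eulerProd, coeff_mk, qpoch_eq]
  exact (meq_poch1 (by omega) (by omega)).coeff (lt_add_one m)

lemma rrSum_trunc (T M : ℕ) (h : T ≤ M) :
    Meq T rrSum (∑ m ∈ range M, (X : PS) ^ (m ^ 2) * (poch X m)⁻¹) := by
  apply Meq_of_coeff
  intro j hj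
  rw [rrSum, coeff_mk]
  have hjM : j + 1 ≤ M := by omega
  rw [← Finset.sum_range_add_sum_Ico (fun m => (X : PS) ^ (m ^ 2) * (poch X m)⁻¹) hjM,
    map_add]
  have hz : ∀ m ∈ Ico (j + 1) M, coeff j ((X : PS) ^ (m ^ 2) * (poch X m)⁻¹) = 0 := by
    intro m hm
    have hm1 : j + 1 ≤ m := (Finset.mem_Ico.1 hm).1
    exact coeff_zero_of_hi _ (by have := Nat.le_self_pow (two_ne_zero) m; omega)
  have hz0 : coeff j (∑ k ∈ Ico (j + 1) M, (X : PS) ^ (k ^ 2) * (poch X k)⁻¹) = 0 := by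
    rw [map_sum]
    exact Finset.sum_eq_zero hz
  rw [hz0, add_zero]
  rfl

lemma rrProd_trunc (T M : ℕ) (h : T ≤ M) :
    Meq T rrProd (∏ j ∈ range M,
      ((1 - (X : PS) ^ (5 * j + 1))⁻¹ * (1 - (X : PS) ^ (5 * j + 4))⁻¹)) := by
  apply Meq_of_coeff
  intro j hj
  rw [rrProd, coeff_mk]
  have hjM : j + 1 ≤ M := by omega
  rw [← Finset.prod_range_mul_prod_Ico (fun i =>
    ((1 - (X : PS) ^ (5 * i + 1))⁻¹ * (1 - (X : PS) ^ (5 * i + 4))⁻¹)) hjM]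
  have tail : Meq (j + 1) (∏ i ∈ Ico (j + 1) M,
      ((1 - (X : PS) ^ (5 * i + 1))⁻¹ * (1 - (X : PS) ^ (5 * i + 4))⁻¹)) 1 := by
    apply Meq.prod_one
    intro i hi
    have hi1 : j + 1 ≤ i := (Finset.mem_Ico.1 hi).1
    have m1 := Meq_inv_one_sub_pow (T := j + 1) (k := 5 * i + 1) (by omega) (by omega)
    have m4 := Meq_inv_one_sub_pow (T := j + 1) (k := 5 * i + 4) (by omega) (by omega)
    simpa using m1.mul m4
  have := (Meq.refl (T := j + 1)
    (∏ i ∈ range (j + 1), ((1 - (X : PS) ^ (5 * i + 1))⁻¹ * (1 - (X : PS) ^ (5 * i + 4))⁻¹))).mul tail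
  rw [mul_one] at this
  exact (this.coeff (lt_add_one j)).symm

/-- the general unit-cancellation congruence for Gaussian binomials -/
lemma poch_gb_one (r T M a b : ℕ) (hr : 1 ≤ r) (hb : b ≤ a) (c1 : T ≤ r * b + r)
    (c2 : T ≤ r * (a - b) + r) (c3 : T ≤ r * M + r) (c4 : T ≤ r * a + r) :
    Meq T (poch ((X : PS) ^ r) M * gb ((X : PS) ^ r) a b) 1 := by
  have key := gb_mul_poch ((X : PS) ^ r) a b hb
  apply Meq.cancel (U := poch ((X : PS) ^ r) b * poch ((X : PS) ^ r) (a - b))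
    (by rw [map_mul, const_poch r _ hr, const_poch r _ hr]; norm_num)
  have e1 : poch ((X : PS) ^ r) M * gb ((X : PS) ^ r) a b *
      (poch ((X : PS) ^ r) b * poch ((X : PS) ^ r) (a - b))
      = poch ((X : PS) ^ r) M * poch ((X : PS) ^ r) a := by
    rw [← key]; ring
  have e2 : Meq T (poch ((X : PS) ^ r) M * poch ((X : PS) ^ r) a)
      (poch ((X : PS) ^ r) b * poch ((X : PS) ^ r) (a - b)) :=
    (Meq_poch_poch hr (by omega) (by omega)).mul (Meq_poch_poch hr (by omega) (by omega))
  refine ((Meq.of_eq e1).trans e2).trans (Meq.of_eq (one_mul _).symm)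

lemma gb_poch_one' (T a m : ℕ) (hm : m ≤ a) (hc : T ≤ (a - m) + 1) :
    Meq T (gb X a m * poch X m) 1 := by
  have key := gb_mul_poch X a m hm
  apply Meq.cancel (U := poch X (a - m)) (by rw [const_pochX]; norm_num)
  exact (Meq.of_eq key).trans ((meq_poch1 (by omega) hc).trans (Meq.of_eq (one_mul _).symm))

/-- finite theta sum -/
noncomputable def ThetaFin (n : ℕ) : PS := ∑ j ∈ Finset.Icc (-(n : ℤ)) (n : ℤ), sg j * X ^ sig j

noncomputable def thetaPS : PS :=
  PowerSeries.mk fun N =>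
    ∑ u ∈ Finset.Icc (-(N : ℤ)) (N : ℤ),
      if u * (5 * u + 1) / 2 = (N : ℤ) then ((-1 : ℚ) ^ u : ℚ) else 0

lemma sig_ge_natAbs (j : ℤ) : j.natAbs ≤ sig j := by
  rw [sig]
  rcases le_or_gt 0 j with h | h
  · rw [if_pos h]; omega
  · rw [if_neg (by omega)]; omega

lemma neg_one_zpow_eq (u : ℤ) : ((-1 : ℚ)) ^ u = if Even u then (1 : ℚ) else -1 := by
  by_cases h : Even u
  · rw [if_pos h, Even.neg_one_zpow h]
  · rw [if_neg h, Odd.neg_one_zpow (Int.not_even_iff_odd.1 h)]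

lemma coeff_sg_X (N : ℕ) (j : ℤ) (e : ℕ) :
    coeff N (sg j * (X : PS) ^ e) = (if Even j then (1 : ℚ) else -1) * (if e = N then 1 else 0) := by
  have hx : coeff N ((X : PS) ^ e) = if e = N then (1 : ℚ) else 0 := by
    rw [PowerSeries.coeff_X_pow]
    exact if_congr eq_comm rfl rfl
  rw [sg]
  by_cases h : Even j
  · rw [if_pos h, if_pos h, one_mul, one_mul, hx]
  · rw [if_neg h, if_neg h, neg_one_mul, neg_one_mul, map_neg, hx]

lemma theta_trunc (T n : ℕ) (h : T ≤ n) : Meq T thetaPS (ThetaFin n) := by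
  apply Meq_of_coeff
  intro N hN
  rw [thetaPS, coeff_mk, ThetaFin, map_sum]
  have step1 : ∑ u ∈ Finset.Icc (-(N : ℤ)) (N : ℤ),
        (if u * (5 * u + 1) / 2 = (N : ℤ) then ((-1 : ℚ) ^ u : ℚ) else 0)
      = ∑ u ∈ Finset.Icc (-(n : ℤ)) (n : ℤ),
        (if u * (5 * u + 1) / 2 = (N : ℤ) then ((-1 : ℚ) ^ u : ℚ) else 0) := by
    apply Finset.sum_subset
    · apply Finset.Icc_subset_Icc <;> omega
    · intro u hu hnu
      simp only [Finset.mem_Icc] at hu hnu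
      rw [if_neg]
      rw [sig_eq_int]
      have h1 := sig_ge_natAbs u
      intro hcon
      have : (sig u : ℤ) = (N : ℤ) := hcon
      omega
  rw [step1]
  apply Finset.sum_congr rfl
  intro u _
  rw [coeff_sg_X, sig_eq_int, neg_one_zpow_eq]
  by_cases hc : sig u = N
  · rw [if_pos (show (sig u : ℤ) = (N : ℤ) by exact_mod_cast hc), if_pos hc, mul_one]
  · rw [if_neg (fun hcon => hc (by exact_mod_cast hcon)), if_neg hc, mul_zero]

lemma tn_sig (n k : ℕ) : sig ((n : ℤ) - k) = tn n k := by
  rcases le_or_gt n k with h | h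
  · by_cases hkn : k = n
    · subst hkn
      rw [sig, tn, if_pos le_rfl, if_pos (by omega),
        show ((k : ℤ) - k).natAbs = 0 by omega, show k - k = 0 by omega]
    · rw [sig, tn, if_pos h, if_neg (show ¬ (0 : ℤ) ≤ (n : ℤ) - k by omega),
        show ((n : ℤ) - k).natAbs = k - n by omega]
  · rw [sig, tn, if_neg (show ¬ n ≤ k by omega), if_pos (show (0 : ℤ) ≤ (n : ℤ) - k by omega),
      show ((n : ℤ) - k).natAbs = n - k by omega]

lemma sg_eq_pow (n k : ℕ) : sg ((n : ℤ) - k) = (-1 : PS) ^ (n + k) := by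
  rw [sg]
  by_cases h : Even ((n : ℤ) - k)
  · rw [if_pos h, Even.neg_one_pow]
    rw [Int.even_sub, Int.even_coe_nat, Int.even_coe_nat] at h
    exact Nat.even_add.2 h
  · rw [if_neg h, Odd.neg_one_pow]
    rw [Int.even_sub, Int.even_coe_nat, Int.even_coe_nat] at h
    rw [← Nat.not_even_iff_odd, Nat.even_add]
    exact h

lemma thetaFin_eq_sum (n : ℕ) :
    ThetaFin n = ∑ k ∈ range (2 * n + 1), (-1 : PS) ^ (n + k) * X ^ tn n k := by
  rw [ThetaFin]
  apply Finset.sum_nbij' (fun u => ((n : ℤ) - u).toNat) (fun k => (n : ℤ) - k)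
  · intro u hu
    simp only [Finset.mem_Icc] at hu
    simp only [Finset.mem_range]
    omega
  · intro k hk
    simp only [Finset.mem_range] at hk
    simp only [Finset.mem_Icc]
    omega
  · intro u hu
    simp only [Finset.mem_Icc] at hu
    omega
  · intro k hk
    simp only [Finset.mem_range] at hk
    omega
  · intro u hu
    simp only [Finset.mem_Icc] at hu
    have hu' : (n : ℤ) - (((n : ℤ) - u).toNat : ℤ) = u := by omega
    rw [← sg_eq_pow, ← tn_sig, hu']

end Assembly

section Final
open Finset

lemma partA : eulerProd * rrSum = thetaPS := by
  apply PowerSeries.ext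
  intro N
  set T := N + 1 with hT
  set n := 7 * T with hn
  have S2 : Meq T rrSum (dS n) := by
    refine (rrSum_trunc T (n + 1) (by omega)).trans ?_
    rw [dS]
    apply Meq.sum
    intro m _
    by_cases hm2 : T ≤ m ^ 2
    · exact (Meq.zero_of_dvd hm2 _).trans (Meq.zero_of_dvd hm2 _).symm
    · push_neg at hm2
      have hmN : m ≤ N := by have := Nat.le_self_pow two_ne_zero m; omega
      have hinv : Meq T (poch X m)⁻¹ (gb X (n - m) m) := by
        apply Meq.cancel (U := poch X m) (by rw [const_pochX]; norm_num)
        refine (Meq.of_eq (PowerSeries.inv_mul_cancel _ (by rw [const_pochX]; norm_num))).trans ?_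
        exact (gb_poch_one' T (n - m) m (by omega) (by omega)).symm
      exact (Meq.refl _).mul hinv
  have h3 : Meq T (poch X T * eS n) (ThetaFin n) := by
    rw [eS, ThetaFin, Finset.mul_sum]
    apply Meq.sum
    intro j hj
    simp only [Finset.mem_Icc] at hj
    rw [sterm]
    by_cases hs : T ≤ sig j
    · refine (Meq.of_eq (show poch X T * (sg j * X ^ sig j * cc n j)
          = X ^ sig j * (poch X T * sg j * cc n j) by ring)).trans
        ((Meq.zero_of_dvd hs _).trans ?_)
      exact ((Meq.of_eq (show sg j * (X : PS) ^ sig j = X ^ sig j * sg j by ring)).trans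
        (Meq.zero_of_dvd hs _)).symm
    · push_neg at hs
      have hna : j.natAbs ≤ N := by have := sig_ge_natAbs j; omega
      obtain ⟨b, hb⟩ : ∃ b : ℕ, (n : ℤ) - 5 * j = 2 * b ∨ (n : ℤ) - 5 * j = 2 * b + 1 :=
        ⟨(((n : ℤ) - 5 * j) / 2).toNat, by omega⟩
      rw [cc_eq n j b hb]
      have hb1 : T ≤ b := by omega
      have hb2 : T ≤ n - b := by omega
      have hbn : b ≤ n := by omega
      have hone : Meq T (poch X T * gb X n b) 1 := by
        have h := poch_gb_one 1 T T n b le_rfl hbn (by omega) (by omega) (by omega) (by omega)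
        rwa [pow_one] at h
      refine (Meq.of_eq (show poch X T * (sg j * X ^ sig j * gb X n b)
          = (sg j * X ^ sig j) * (poch X T * gb X n b) by ring)).trans ?_
      exact ((Meq.refl (sg j * (X : PS) ^ sig j)).mul hone).trans (Meq.of_eq (mul_one _))
  have chain : Meq T (eulerProd * rrSum) thetaPS := by
    refine ((euler_trunc T T le_rfl).mul S2).trans ?_
    rw [schur n]
    exact h3.trans (theta_trunc T n (by omega)).symm
  exact chain.coeff (by omega)

lemma partB : thetaPS = eulerProd * rrProd := by
  apply PowerSeries.ext
  intro N
  set T := N + 1 with hT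
  set n := 2 * T with hn
  have e1 : Meq T eulerProd (poch X (5 * n)) := euler_trunc T (5 * n) (by omega)
  have e2 : Meq T rrProd
      (∏ i ∈ range n, ((1 - (X : PS) ^ (5 * i + 1))⁻¹ * (1 - (X : PS) ^ (5 * i + 4))⁻¹)) :=
    rrProd_trunc T n (by omega)
  have split5 : ∀ (f : ℕ → PS) (m : ℕ), ∏ j ∈ range (5 * m), f j
      = ∏ i ∈ range m, (f (5 * i) * f (5 * i + 1) * f (5 * i + 2) * f (5 * i + 3) * f (5 * i + 4)) := by
    intro f m
    induction m with
    | zero => simp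
    | succ m ih =>
      rw [show 5 * (m + 1) = 5 * m + 1 + 1 + 1 + 1 + 1 by ring, prod_range_succ, prod_range_succ,
        prod_range_succ, prod_range_succ, prod_range_succ, ih, prod_range_succ]
      rw [show 5 * m + 1 + 1 + 1 + 1 = 5 * m + 4 by ring, show 5 * m + 1 + 1 + 1 = 5 * m + 3 by ring,
        show 5 * m + 1 + 1 = 5 * m + 2 by ring]
      ring
  have hsplit : poch X (5 * n) = ∏ i ∈ range n,
      ((1 - (X : PS) ^ (5 * i + 1)) * (1 - (X : PS) ^ (5 * i + 2)) * (1 - (X : PS) ^ (5 * i + 3)) *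
        (1 - (X : PS) ^ (5 * i + 4)) * (1 - (X : PS) ^ (5 * i + 5))) := by
    rw [poch, split5 (fun j => 1 - (X : PS) ^ (j + 1)) n]
  have combine : poch X (5 * n) *
        (∏ i ∈ range n, ((1 - (X : PS) ^ (5 * i + 1))⁻¹ * (1 - (X : PS) ^ (5 * i + 4))⁻¹))
      = (∏ i ∈ range n, (1 - (X : PS) ^ (5 * i + 3))) *
        (∏ i ∈ range n, (1 - (X : PS) ^ (5 * i + 2))) * poch ((X : PS) ^ 5) n := by
    rw [hsplit, ← Finset.prod_mul_distrib]
    have per : ∀ i ∈ range n,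
        (1 - (X : PS) ^ (5 * i + 1)) * (1 - (X : PS) ^ (5 * i + 2)) * (1 - (X : PS) ^ (5 * i + 3)) *
          (1 - (X : PS) ^ (5 * i + 4)) * (1 - (X : PS) ^ (5 * i + 5)) *
          ((1 - (X : PS) ^ (5 * i + 1))⁻¹ * (1 - (X : PS) ^ (5 * i + 4))⁻¹)
        = (1 - (X : PS) ^ (5 * i + 3)) *
            ((1 - (X : PS) ^ (5 * i + 2)) * (1 - ((X : PS) ^ 5) ^ (i + 1))) := by
      intro i _
      have i1 : (1 - (X : PS) ^ (5 * i + 1)) * (1 - (X : PS) ^ (5 * i + 1))⁻¹ = 1 :=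
        PowerSeries.mul_inv_cancel _ (by rw [constCoeff_one_sub_pow _ (by omega)]; norm_num)
      have i4 : (1 - (X : PS) ^ (5 * i + 4)) * (1 - (X : PS) ^ (5 * i + 4))⁻¹ = 1 :=
        PowerSeries.mul_inv_cancel _ (by rw [constCoeff_one_sub_pow _ (by omega)]; norm_num)
      rw [show ((X : PS) ^ 5) ^ (i + 1) = (X : PS) ^ (5 * i + 5) by
        rw [← pow_mul, show 5 * (i + 1) = 5 * i + 5 by ring]]
      linear_combination ((1 - (X : PS) ^ (5 * i + 2)) * (1 - (X : PS) ^ (5 * i + 3)) *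
          (1 - (X : PS) ^ (5 * i + 5)) * (1 - (X : PS) ^ (5 * i + 4)) *
          (1 - (X : PS) ^ (5 * i + 4))⁻¹) * i1 +
        ((1 - (X : PS) ^ (5 * i + 2)) * (1 - (X : PS) ^ (5 * i + 3)) *
          (1 - (X : PS) ^ (5 * i + 5))) * i4
    rw [Finset.prod_congr rfl per, Finset.prod_mul_distrib, Finset.prod_mul_distrib, poch]
    ring
  have main : Meq T (eulerProd * rrProd) (ThetaFin n) := by
    refine (e1.mul e2).trans ?_
    rw [combine, jtp n, thetaFin_eq_sum n, Finset.sum_mul]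
    apply Meq.sum
    intro k hk
    have hk2 : k ≤ 2 * n := Nat.lt_succ_iff.1 (Finset.mem_range.1 hk)
    by_cases ht : T ≤ tn n k
    · refine (Meq.of_eq (show ((-1 : PS) ^ (n + k) * X ^ tn n k * gb ((X : PS) ^ 5) (2 * n) k) *
          poch ((X : PS) ^ 5) n
          = X ^ tn n k * ((-1 : PS) ^ (n + k) * gb ((X : PS) ^ 5) (2 * n) k *
            poch ((X : PS) ^ 5) n) by ring)).trans ((Meq.zero_of_dvd ht _).trans ?_)
      exact ((Meq.of_eq (show (-1 : PS) ^ (n + k) * (X : PS) ^ tn n k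
          = X ^ tn n k * (-1 : PS) ^ (n + k) by ring)).trans (Meq.zero_of_dvd ht _)).symm
    · push_neg at ht
      have hd2 : n - k ≤ tn n k ∧ k - n ≤ tn n k := by
        rw [tn]; split_ifs <;> constructor <;> omega
      have hone : Meq T (poch ((X : PS) ^ 5) n * gb ((X : PS) ^ 5) (2 * n) k) 1 :=
        poch_gb_one 5 T n (2 * n) k (by omega) hk2 (by omega) (by omega) (by omega) (by omega)
      refine (Meq.of_eq (show ((-1 : PS) ^ (n + k) * X ^ tn n k * gb ((X : PS) ^ 5) (2 * n) k) *
          poch ((X : PS) ^ 5) n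
          = ((-1 : PS) ^ (n + k) * X ^ tn n k) *
            (poch ((X : PS) ^ 5) n * gb ((X : PS) ^ 5) (2 * n) k) by ring)).trans ?_
      exact ((Meq.refl _).mul hone).trans (Meq.of_eq (mul_one _))
  exact ((theta_trunc T n (by omega)).trans main.symm).coeff (by omega)

lemma euler_const : constantCoeff eulerProd = 1 := by
  have h0 : constantCoeff eulerProd = coeff 0 eulerProd := by
    rw [PowerSeries.coeff_zero_eq_constantCoeff]
  rw [h0, eulerProd, coeff_mk, qpoch_eq, PowerSeries.coeff_zero_eq_constantCoeff, const_pochX]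

end Final


theorem rogers_ramanujan_aux :
    rrSum = rrProd ∧
    eulerProd⁻¹ *
        PowerSeries.mk (fun N =>
          ∑ u ∈ Finset.Icc (-(N : ℤ)) (N : ℤ),
            if u * (5 * u + 1) / 2 = (N : ℤ) then ((-1 : ℚ) ^ u : ℚ) else 0)
      = rrSum := by
  have hu : constantCoeff eulerProd ≠ 0 := by rw [euler_const]; norm_num
  constructor
  · have h : eulerProd * rrSum = eulerProd * rrProd := by rw [partA, partB]
    refine mul_left_cancel₀ (fun hz => hu ?_) h
    rw [hz]; simp
  · show eulerProd⁻¹ * thetaPS = rrSum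
    rw [← partA, ← mul_assoc, PowerSeries.inv_mul_cancel _ hu, one_mul]

/-- the Rogers–Ramanujan identity
`Σ_{m=0}^∞ q^{m²}/(q)_m = ∏_{j=0}^∞ 1/((1-q^{5j+1})(1-q^{5j+4}))`, and equivalently (the
`n = k = 1` case of the main identity)
`(1/(q)_∞) Σ_{u∈ℤ} (-1)^u q^{(5/2)u² + u/2} = Σ_{m=0}^∞ q^{m²}/(q)_m`
(note `(5/2)u² + u/2 = u(5u+1)/2 ∈ ℕ`, and this exponent equals `N` only if `|u| ≤ N`). -/
theorem rogers_ramanujan :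
    rrSum = rrProd ∧
    eulerProd⁻¹ *
        PowerSeries.mk (fun N =>
          ∑ u ∈ Finset.Icc (-(N : ℤ)) (N : ℤ),
            if u * (5 * u + 1) / 2 = (N : ℤ) then ((-1 : ℚ) ^ u : ℚ) else 0)
      = rrSum := by
  exact rogers_ramanujan_aux
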